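/- Suppose S ⊆ Fin N is a uniqueness set for W (the only f ∈ W vanishing on S is 0), let f_* ∈ W, and let the sequence (f^{(k)})_{k≥0} satisfy the ILSR iteration f^{(k+1)} = f^{(k)} + P(Σ_{u ∈ S} (f_*(u) − f^{(k)}(u)) • δ_u) with f^{(0)} ∈ W. Then f^{(k)} converges to f_* as k → ∞. -/

import Mathlib

open scoped BigOperators

section ILSRAux

variable {N : ℕ}

lemma EuclideanSpace.finset_sum_apply (S : Finset (Fin N))
    (g : Fin N → EuclideanSpace ℝ (Fin N)) (v : Fin N) :
    (∑ u ∈ S, g u) v = ∑ u ∈ S, g u v := by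
  induction S using Finset.cons_induction with
  | empty => rfl
  | cons a s ha ih => rw [Finset.sum_cons, Finset.sum_cons, ← ih]; rfl

/-- The masking map `x ↦ ∑_{u∈S} x u • δ_u`. -/
noncomputable def ILSRmask (S : Finset (Fin N)) :
    EuclideanSpace ℝ (Fin N) →ₗ[ℝ] EuclideanSpace ℝ (Fin N) where
  toFun x := ∑ u ∈ S, (x u) • EuclideanSpace.single u (1 : ℝ)
  map_add' x y := by
    rw [← Finset.sum_add_distrib]
    refine Finset.sum_congr rfl fun u _ => ?_
    rw [← add_smul]; rfl
  map_smul' c x := by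
    rw [Finset.smul_sum]
    refine Finset.sum_congr rfl fun u _ => ?_
    rw [smul_smul]; rfl

lemma ILSRmask_apply (S : Finset (Fin N)) (x : EuclideanSpace ℝ (Fin N)) (v : Fin N) :
    ILSRmask S x v = if v ∈ S then x v else 0 := by
  classical
  have h : ILSRmask S x v = ∑ u ∈ S, ((x u) • EuclideanSpace.single u (1 : ℝ)) v :=
    EuclideanSpace.finset_sum_apply S _ v
  rw [h]
  simp only [PiLp.smul_apply, EuclideanSpace.single_apply, smul_eq_mul, mul_ite,
    mul_one, mul_zero]
  rw [Finset.sum_ite_eq]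

lemma ILSRmask_inner_left (S : Finset (Fin N)) (x a : EuclideanSpace ℝ (Fin N)) :
    (inner ℝ (ILSRmask S x) a : ℝ) = ∑ u ∈ S, x u * a u := by
  classical
  rw [PiLp.inner_apply]
  simp only [RCLike.inner_apply, starRingEnd_apply, star_trivial, ILSRmask_apply, mul_comm (a _)]
  rw [← Finset.sum_filter_add_sum_filter_not Finset.univ (· ∈ S)]
  have h2 : ∑ v ∈ Finset.univ.filter (¬ · ∈ S),
      (if v ∈ S then x v else 0) * a v = 0 := by
    refine Finset.sum_eq_zero fun v hv => ?_
    simp only [Finset.mem_filter] at hv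
    simp [hv.2]
  rw [h2, add_zero]
  have h3 : Finset.univ.filter (· ∈ S) = S := by
    ext v; simp
  rw [h3]
  exact Finset.sum_congr rfl fun v hv => by simp [hv]

lemma ILSRmask_norm_sq (S : Finset (Fin N)) (x : EuclideanSpace ℝ (Fin N)) :
    ‖ILSRmask S x‖ ^ 2 = ∑ u ∈ S, (x u) ^ 2 := by
  rw [← real_inner_self_eq_norm_sq, ILSRmask_inner_left]
  refine Finset.sum_congr rfl fun u hu => ?_
  rw [ILSRmask_apply, if_pos hu, sq]

end ILSRAux

/-- ILSR convergence: if `S` is a uniqueness set for `W`, `f_* ∈ W`,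
`f^{(0)} ∈ W`, and `f^{(k+1)} = f^{(k)} + P(Σ_{u∈S} (f_*(u) − f^{(k)}(u)) • δ_u)`,
then `f^{(k)} → f_*`. -/
theorem ILSR_convergence
    {N : ℕ} (W : Submodule ℝ (EuclideanSpace ℝ (Fin N)))
    (S : Finset (Fin N))
    (hU : ∀ g ∈ W, (∀ u ∈ S, g u = 0) → g = 0)
    (fstar : EuclideanSpace ℝ (Fin N)) (hfstar : fstar ∈ W)
    (f : ℕ → EuclideanSpace ℝ (Fin N)) (hf0 : f 0 ∈ W)
    (hiter : ∀ k : ℕ, f (k + 1) = f k +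
      (W.orthogonalProjectionOnto
        (∑ u ∈ S, (fstar u - f k u) • EuclideanSpace.single u (1 : ℝ)) :
        EuclideanSpace ℝ (Fin N))) :
    Filter.Tendsto f Filter.atTop (nhds fstar) := by
  classical
  -- the error map G x = x - P (mask x), as a linear map
  set G : EuclideanSpace ℝ (Fin N) →ₗ[ℝ] EuclideanSpace ℝ (Fin N) :=
    LinearMap.id - (W.subtype ∘ₗ (W.orthogonalProjectionOnto).toLinearMap ∘ₗ ILSRmask S)
    with hG
  have hGapply : ∀ x : EuclideanSpace ℝ (Fin N),
      G x = x - (W.orthogonalProjectionOnto (ILSRmask S x) : EuclideanSpace ℝ (Fin N)) := by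
    intro x; simp [hG]
  -- error sequence
  set e : ℕ → EuclideanSpace ℝ (Fin N) := fun k => fstar - f k with he
  have he_succ : ∀ k, e (k + 1) = G (e k) := by
    intro k
    have hm : (∑ u ∈ S, (fstar u - f k u) • EuclideanSpace.single u (1 : ℝ))
        = ILSRmask S (fstar - f k) := by
      show _ = ∑ u ∈ S, ((fstar - f k) u) • EuclideanSpace.single u (1 : ℝ)
      exact Finset.sum_congr rfl fun u _ => by rw [PiLp.sub_apply]
    have h2 := hiter k
    rw [hm] at h2
    show fstar - f (k + 1) = G (fstar - f k)
    rw [h2, hGapply]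
    abel
  -- e k ∈ W
  have heW : ∀ k, e k ∈ W := by
    intro k
    induction k with
    | zero => exact W.sub_mem hfstar hf0
    | succ k ih =>
      rw [he_succ k, hGapply]
      exact W.sub_mem ih (W.orthogonalProjectionOnto (ILSRmask S (e k))).2
  -- key contraction inequality
  have hkey : ∀ x : EuclideanSpace ℝ (Fin N), x ∈ W →
      ‖G x‖ ^ 2 ≤ ‖x‖ ^ 2 - ∑ u ∈ S, (x u) ^ 2 := by
    intro x hx
    rw [hGapply]
    set y : EuclideanSpace ℝ (Fin N) :=
      (W.orthogonalProjectionOnto (ILSRmask S x) : EuclideanSpace ℝ (Fin N)) with hy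
    have h1 : (inner ℝ x y : ℝ) = ∑ u ∈ S, (x u) ^ 2 := by
      have horth : (inner ℝ (ILSRmask S x - y) x : ℝ) = 0 :=
        Submodule.starProjection_inner_eq_zero (K := W) (ILSRmask S x) x hx
      rw [inner_sub_left, sub_eq_zero] at horth
      calc (inner ℝ x y : ℝ) = (inner ℝ y x : ℝ) := real_inner_comm y x
        _ = (inner ℝ (ILSRmask S x) x : ℝ) := horth.symm
        _ = ∑ u ∈ S, x u * x u := ILSRmask_inner_left S x x
        _ = ∑ u ∈ S, (x u) ^ 2 := Finset.sum_congr rfl fun u _ => (sq (x u)).symm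
    have h2 : ‖y‖ ^ 2 ≤ ∑ u ∈ S, (x u) ^ 2 := by
      rw [← ILSRmask_norm_sq S x]
      have hno := Submodule.orthogonalProjectionOnto_norm_le W
      have hle : ‖y‖ ≤ ‖ILSRmask S x‖ := by
        calc ‖y‖ = ‖W.orthogonalProjectionOnto (ILSRmask S x)‖ := rfl
          _ ≤ ‖(W.orthogonalProjectionOnto :
                EuclideanSpace ℝ (Fin N) →L[ℝ] W)‖ * ‖ILSRmask S x‖ :=
              ContinuousLinearMap.le_opNorm _ _
          _ ≤ 1 * ‖ILSRmask S x‖ :=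
              mul_le_mul_of_nonneg_right hno (norm_nonneg _)
          _ = ‖ILSRmask S x‖ := one_mul _
      exact pow_le_pow_left₀ (norm_nonneg _) hle 2
    calc ‖x - y‖ ^ 2 = ‖x‖ ^ 2 - 2 * (inner ℝ x y : ℝ) + ‖y‖ ^ 2 := norm_sub_sq_real x y
      _ ≤ ‖x‖ ^ 2 - 2 * (∑ u ∈ S, (x u) ^ 2) + ∑ u ∈ S, (x u) ^ 2 := by
          rw [h1]; linarith [h2]
      _ = ‖x‖ ^ 2 - ∑ u ∈ S, (x u) ^ 2 := by ring
  -- strict contraction on nonzero elements of W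
  have hstrict : ∀ x : EuclideanSpace ℝ (Fin N), x ∈ W → x ≠ 0 → ‖G x‖ < ‖x‖ := by
    intro x hx hx0
    have hqnn : 0 ≤ ∑ u ∈ S, (x u) ^ 2 := Finset.sum_nonneg fun u _ => sq_nonneg _
    have hqne : ∑ u ∈ S, (x u) ^ 2 ≠ 0 := by
      intro h
      apply hx0
      refine hU x hx fun u hu => ?_
      have hz := (Finset.sum_eq_zero_iff_of_nonneg fun u _ => sq_nonneg (x u)).mp h u hu
      exact (pow_eq_zero_iff two_ne_zero).mp hz
    have hqpos : 0 < ∑ u ∈ S, (x u) ^ 2 := lt_of_le_of_ne hqnn (Ne.symm hqne)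
    have h := hkey x hx
    have h2 : ‖G x‖ ^ 2 < ‖x‖ ^ 2 := by linarith
    exact lt_of_pow_lt_pow_left₀ 2 (norm_nonneg _) h2
  -- find uniform contraction constant via compactness
  obtain ⟨c, hc0, hc1, hc⟩ : ∃ c : ℝ, 0 ≤ c ∧ c < 1 ∧ ∀ x ∈ W, ‖G x‖ ≤ c * ‖x‖ := by
    by_cases hW : ∀ x ∈ W, x = (0 : EuclideanSpace ℝ (Fin N))
    · refine ⟨0, le_refl _, zero_lt_one, fun x hx => ?_⟩
      simp [hW x hx]
    · push_neg at hW
      obtain ⟨z, hzW, hz0⟩ := hW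
      -- the unit sphere of W
      set K : Set (EuclideanSpace ℝ (Fin N)) := {x | x ∈ W ∧ ‖x‖ = 1} with hK
      have hKne : K.Nonempty := by
        refine ⟨‖z‖⁻¹ • z, W.smul_mem _ hzW, ?_⟩
        rw [norm_smul, norm_inv, norm_norm, inv_mul_cancel₀ (norm_ne_zero_iff.mpr hz0)]
      have hKc : IsCompact K := by
        have h1 : IsClosed K := by
          have hKeq : K = (W : Set (EuclideanSpace ℝ (Fin N))) ∩ Metric.sphere 0 1 := by
            ext x
            simp [hK, Metric.mem_sphere, dist_zero_right]
          rw [hKeq]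
          exact (Submodule.closed_of_finiteDimensional W).inter Metric.isClosed_sphere
        have h2 : Bornology.IsBounded K := by
          refine Metric.isBounded_iff.mpr ⟨2, fun x hx y hy => ?_⟩
          calc dist x y ≤ ‖x‖ + ‖y‖ := dist_le_norm_add_norm x y
            _ = 2 := by rw [hx.2, hy.2]; norm_num
        exact Metric.isCompact_of_isClosed_isBounded h1 h2
      have hcont : Continuous fun x : EuclideanSpace ℝ (Fin N) => ‖G x‖ :=
        (G.continuous_of_finiteDimensional).norm
      obtain ⟨x₀, hx₀K, hx₀max⟩ := hKc.exists_isMaxOn hKne hcont.continuousOn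
      have hx₀W : x₀ ∈ W := hx₀K.1
      have hx₀n : ‖x₀‖ = 1 := hx₀K.2
      refine ⟨‖G x₀‖, norm_nonneg _, ?_, ?_⟩
      · have hx₀ne : x₀ ≠ 0 := by
          intro h
          rw [h, norm_zero] at hx₀n
          exact one_ne_zero hx₀n.symm
        have := hstrict x₀ hx₀W hx₀ne
        rwa [hx₀n] at this
      · intro x hx
        by_cases hx0 : x = 0
        · simp [hx0]
        · have hxn : ‖x‖ ≠ 0 := norm_ne_zero_iff.mpr hx0
          have hmem : (‖x‖⁻¹ • x) ∈ K := by
            refine ⟨W.smul_mem _ hx, ?_⟩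
            rw [norm_smul, norm_inv, norm_norm, inv_mul_cancel₀ hxn]
          have h1 : ‖G (‖x‖⁻¹ • x)‖ ≤ ‖G x₀‖ := hx₀max hmem
          rw [map_smul, norm_smul, norm_inv, norm_norm] at h1
          calc ‖G x‖ = ‖x‖ * (‖x‖⁻¹ * ‖G x‖) := by field_simp
            _ ≤ ‖x‖ * ‖G x₀‖ := mul_le_mul_of_nonneg_left h1 (norm_nonneg _)
            _ = ‖G x₀‖ * ‖x‖ := mul_comm _ _
  -- geometric decay of the error
  have hbound : ∀ k, ‖e k‖ ≤ c ^ k * ‖e 0‖ := by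
    intro k
    induction k with
    | zero => simp
    | succ k ih =>
      rw [he_succ k]
      calc ‖G (e k)‖ ≤ c * ‖e k‖ := hc _ (heW k)
        _ ≤ c * (c ^ k * ‖e 0‖) := mul_le_mul_of_nonneg_left ih hc0
        _ = c ^ (k + 1) * ‖e 0‖ := by ring
  -- conclude
  have htz : Filter.Tendsto (fun k => ‖e k‖) Filter.atTop (nhds 0) := by
    have h1 : Filter.Tendsto (fun k : ℕ => c ^ k * ‖e 0‖) Filter.atTop (nhds 0) := by
      have := tendsto_pow_atTop_nhds_zero_of_lt_one hc0 hc1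
      simpa using this.mul_const ‖e 0‖
    exact squeeze_zero (fun k => norm_nonneg _) hbound h1
  have hfinal : Filter.Tendsto (fun k => ‖f k - fstar‖) Filter.atTop (nhds 0) := by
    refine htz.congr fun k => ?_
    show ‖fstar - f k‖ = ‖f k - fstar‖
    rw [norm_sub_rev]
  exact tendsto_iff_norm_sub_tendsto_zero.mpr hfinal
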